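/- Let P be the path on vertices v_0,...,v_n with weight ω, and let L be a waterfall list that is 'good' (|L(i)| ≥ ω(i) + ω(i+1) for all 1 ≤ i ≤ n−1) and satisfies |L(n)| ≥ ω(n). Then P is (L,ω)-choosable if and only if for every j ∈ {0,...,n}, |⋃_{k=0}^{j} L(k)| ≥ Σ_{k=0}^{j} ω(k). -/

import Mathlib

def PathChoosable (n : ℕ) (L : ℕ → Finset ℕ) (ω : ℕ → ℕ) : Prop :=
  ∃ c : ℕ → Finset ℕ, (∀ i ≤ n, c i ⊆ L i ∧ (c i).card = ω i) ∧
    ∀ i, i < n → Disjoint (c i) (c (i + 1))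

def Waterfall (n : ℕ) (L : ℕ → Finset ℕ) : Prop :=
  ∀ i ≤ n, ∀ j ≤ n, i + 2 ≤ j → Disjoint (L i) (L j)

/-- One can pick an `m`-subset of `S` that either misses `T` or contains all of `S \ T`
(i.e. meets `T` as little as possible). -/
lemma pick_subset (S T : Finset ℕ) (m : ℕ) (h : m ≤ S.card) :
    ∃ c : Finset ℕ, c ⊆ S ∧ c.card = m ∧ (c ∩ T = ∅ ∨ S \ T ⊆ c) := by
  by_cases hc : m ≤ (S \ T).card
  · obtain ⟨c, hcs, hcard⟩ := Finset.exists_subset_card_eq hc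
    refine ⟨c, hcs.trans Finset.sdiff_subset, hcard, Or.inl ?_⟩
    rw [← Finset.disjoint_iff_inter_eq_empty]
    exact Finset.sdiff_disjoint.mono_left hcs
  · push_neg at hc
    have h1 : (S \ T).card + (S ∩ T).card = S.card := Finset.card_sdiff_add_card_inter S T
    have hint : m - (S \ T).card ≤ (S ∩ T).card := by omega
    obtain ⟨B, hB, hBcard⟩ := Finset.exists_subset_card_eq hint
    have hdisj : Disjoint (S \ T) B :=
      Finset.sdiff_disjoint.mono_right (hB.trans Finset.inter_subset_right)
    refine ⟨S \ T ∪ B, ?_, ?_, Or.inr Finset.subset_union_left⟩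
    · exact Finset.union_subset Finset.sdiff_subset (hB.trans Finset.inter_subset_left)
    · rw [Finset.card_union_of_disjoint hdisj, hBcard]
      omega

lemma main_aux : ∀ n : ℕ, ∀ L : ℕ → Finset ℕ, ∀ ω : ℕ → ℕ,
    Waterfall n L →
    (∀ i, 1 ≤ i → i ≤ n - 1 → (L i).card ≥ ω i + ω (i + 1)) →
    (L n).card ≥ ω n →
    (∀ j ≤ n, ((Finset.Icc 0 j).biUnion L).card ≥ ∑ k ∈ Finset.Icc 0 j, ω k) →
    PathChoosable n L ω := by
  intro n
  induction n with
  | zero =>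
    intro L ω _ _ hlast _
    obtain ⟨c0, hc0, hcard⟩ := Finset.exists_subset_card_eq hlast
    refine ⟨fun _ => c0, fun i hi => ?_, fun i hi => absurd hi (by omega)⟩
    interval_cases i
    exact ⟨hc0, hcard⟩
  | succ m ih =>
    intro L ω hw hgood hlast hpre
    have hLdisj : ∀ k, k + 2 ≤ m + 1 → Disjoint (L k) (L (m + 1)) :=
      fun k hk => hw k (by omega) (m + 1) le_rfl hk
    obtain ⟨cn, hcnL, hcncard, hcnprop⟩ := pick_subset (L (m + 1)) (L m) (ω (m + 1)) hlast
    set L' : ℕ → Finset ℕ := Function.update L m (L m \ cn) with hL'def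
    have hL'n : L' m = L m \ cn := Function.update_self m _ L
    have hL'k : ∀ k, k ≠ m → L' k = L k := fun k hk => Function.update_of_ne hk _ L
    have hL'sub : ∀ k, L' k ⊆ L k := by
      intro k
      by_cases hk : k = m
      · subst hk; rw [hL'n]; exact Finset.sdiff_subset
      · rw [hL'k k hk]
    -- key set equality for the top prefix
    have hUeq : (Finset.Icc 0 m).biUnion L' = ((Finset.Icc 0 m).biUnion L) \ cn := by
      ext x
      simp only [Finset.mem_biUnion, Finset.mem_sdiff, Finset.mem_Icc]
      constructor
      · rintro ⟨k, ⟨-, hk⟩, hx⟩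
        by_cases hkn : k = m
        · rw [hkn, hL'n, Finset.mem_sdiff] at hx
          exact ⟨⟨m, ⟨Nat.zero_le _, le_rfl⟩, hx.1⟩, hx.2⟩
        · rw [hL'k k hkn] at hx
          refine ⟨⟨k, ⟨Nat.zero_le _, hk⟩, hx⟩, fun hxc => ?_⟩
          exact Finset.disjoint_left.mp (hLdisj k (by omega)) hx (hcnL hxc)
      · rintro ⟨⟨k, ⟨-, hk⟩, hx⟩, hxc⟩
        by_cases hkn : k = m
        · rw [hkn] at hx
          exact ⟨m, ⟨Nat.zero_le _, le_rfl⟩, by rw [hL'n]; exact Finset.mem_sdiff.mpr ⟨hx, hxc⟩⟩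
        · exact ⟨k, ⟨Nat.zero_le _, hk⟩, by rw [hL'k k hkn]; exact hx⟩
    have hpre' : ∀ j ≤ m, ((Finset.Icc 0 j).biUnion L').card ≥ ∑ k ∈ Finset.Icc 0 j, ω k := by
      intro j hj
      rcases lt_or_eq_of_le hj with hj' | hj'
      · have heq : (Finset.Icc 0 j).biUnion L' = (Finset.Icc 0 j).biUnion L := by
          refine Finset.biUnion_congr rfl fun k hk => ?_
          rw [Finset.mem_Icc] at hk
          exact hL'k k (by omega)
        rw [heq]
        exact hpre j (by omega)
      · subst hj'
        rw [hUeq]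
        rcases hcnprop with hemp | hsub
        · have hd : Disjoint ((Finset.Icc 0 j).biUnion L) cn := by
            rw [Finset.disjoint_biUnion_left]
            intro k hk
            rw [Finset.mem_Icc] at hk
            by_cases hkn : k = j
            · subst hkn
              rw [Finset.disjoint_iff_inter_eq_empty]
              rwa [Finset.inter_comm]
            · exact Finset.disjoint_of_subset_right hcnL (hLdisj k (by omega))
          rw [Finset.sdiff_eq_self_of_disjoint hd]
          exact hpre j (by omega)
        · have h2 : ((Finset.Icc 0 j).biUnion L) \ cn
              = ((Finset.Icc 0 (j + 1)).biUnion L) \ cn := by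
            apply Finset.Subset.antisymm
            · apply Finset.sdiff_subset_sdiff _ le_rfl
              exact Finset.biUnion_subset_biUnion_of_subset_left _
                (Finset.Icc_subset_Icc_right (by omega))
            · intro x hx
              rw [Finset.mem_sdiff] at hx ⊢
              obtain ⟨hxU, hxc⟩ := hx
              refine ⟨?_, hxc⟩
              rw [Finset.mem_biUnion] at hxU ⊢
              obtain ⟨k, hk, hxk⟩ := hxU
              rw [Finset.mem_Icc] at hk
              by_cases hkn : k = j + 1
              · subst hkn
                by_cases hxj : x ∈ L j
                · exact ⟨j, Finset.mem_Icc.mpr ⟨Nat.zero_le _, le_rfl⟩, hxj⟩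
                · exact absurd (hsub (Finset.mem_sdiff.mpr ⟨hxk, hxj⟩)) hxc
              · exact ⟨k, Finset.mem_Icc.mpr ⟨Nat.zero_le _, by omega⟩, hxk⟩
          rw [h2]
          have h3 := Finset.le_card_sdiff cn ((Finset.Icc 0 (j + 1)).biUnion L)
          have h4 := hpre (j + 1) le_rfl
          have h5 : ∑ k ∈ Finset.Icc 0 (j + 1), ω k
              = (∑ k ∈ Finset.Icc 0 j, ω k) + ω (j + 1) :=
            Finset.sum_Icc_succ_top (Nat.zero_le _) ω
          omega
    have hlast' : (L' m).card ≥ ω m := by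
      rcases Nat.eq_zero_or_pos m with rfl | hm
      · have h0 := hpre' 0 le_rfl
        simpa using h0
      · have hg := hgood m hm (by omega)
        have h3 := Finset.le_card_sdiff cn (L m)
        rw [hL'n]
        omega
    have hgood' : ∀ i, 1 ≤ i → i ≤ m - 1 → (L' i).card ≥ ω i + ω (i + 1) := by
      intro i h1 h2
      rw [hL'k i (by omega)]
      exact hgood i h1 (by omega)
    have hw' : Waterfall m L' := by
      intro i hi j hj hij
      exact (hw i (by omega) j (by omega) hij).mono (hL'sub i) (hL'sub j)
    obtain ⟨c', hc', hd'⟩ := ih L' ω hw' hgood' hlast' hpre'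
    refine ⟨Function.update c' (m + 1) cn, ?_, ?_⟩
    · intro i hi
      rcases eq_or_lt_of_le hi with hi' | hi'
      · subst hi'
        rw [Function.update_self]
        exact ⟨hcnL, hcncard⟩
      · rw [Function.update_of_ne (by omega)]
        obtain ⟨hsub, hcard⟩ := hc' i (by omega)
        exact ⟨hsub.trans (hL'sub i), hcard⟩
    · intro i hi
      rcases Nat.lt_or_ge i m with hi' | hi'
      · rw [Function.update_of_ne (by omega : i ≠ m + 1),
          Function.update_of_ne (by omega : i + 1 ≠ m + 1)]
        exact hd' i hi'
      · have him : i = m := by omega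
        subst him
        rw [Function.update_of_ne (by omega : i ≠ i + 1), Function.update_self]
        have hsub := (hc' i le_rfl).1
        rw [hL'n] at hsub
        exact Finset.sdiff_disjoint.mono_left hsub

theorem good_waterfall_choosable_iff (n : ℕ) (L : ℕ → Finset ℕ) (ω : ℕ → ℕ)
    (hw : Waterfall n L)
    (hgood : ∀ i, 1 ≤ i → i ≤ n - 1 → (L i).card ≥ ω i + ω (i + 1))
    (hlast : (L n).card ≥ ω n) :
    PathChoosable n L ω ↔
      ∀ j ≤ n, ((Finset.Icc 0 j).biUnion L).card ≥ ∑ k ∈ Finset.Icc 0 j, ω k := by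
  constructor
  · rintro ⟨c, hc, hd⟩ j hj
    have key : ∀ x y, x ≤ n → y ≤ n → x < y → Disjoint (c x) (c y) := by
      intro x y hx hy hxy
      rcases eq_or_lt_of_le (Nat.succ_le_of_lt hxy) with h | h
      · rw [← h]
        exact hd x (by omega)
      · exact (hw x hx y hy (by omega)).mono (hc x hx).1 (hc y hy).1
    have hdis : ∀ x ∈ Finset.Icc 0 j, ∀ y ∈ Finset.Icc 0 j, x ≠ y → Disjoint (c x) (c y) := by
      intro x hx y hy hxy
      rw [Finset.mem_Icc] at hx hy
      rcases Nat.lt_or_ge x y with h | h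
      · exact key x y (by omega) (by omega) h
      · exact (key y x (by omega) (by omega) (by omega)).symm
    calc ∑ k ∈ Finset.Icc 0 j, ω k = ∑ k ∈ Finset.Icc 0 j, (c k).card := by
          refine Finset.sum_congr rfl fun k hk => ?_
          rw [Finset.mem_Icc] at hk
          exact ((hc k (by omega)).2).symm
      _ = ((Finset.Icc 0 j).biUnion c).card := (Finset.card_biUnion hdis).symm
      _ ≤ ((Finset.Icc 0 j).biUnion L).card := by
          apply Finset.card_le_card
          intro x hx
          rw [Finset.mem_biUnion] at hx ⊢
          obtain ⟨k, hk, hxk⟩ := hx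
          have hk' : k ≤ j := (Finset.mem_Icc.mp hk).2
          exact ⟨k, hk, (hc k (by omega)).1 hxk⟩
  · intro hpre
    exact main_aux n L ω hw hgood hlast hpre
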